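/- Let K_e ∈ ℝ^{n×n} be symmetric positive semidefinite and nonzero, m_e ∈ ℝⁿ, and τ ∈ (0,1). Then the function λ ↦ H_τ(m_e, K_e, λ) = m_eᵀ (I − ((1−τ)/λ) K_e)^{-1} m_e + (λ/τ) tr((I − ((1−τ)/λ) K_e)^{τ/(τ−1)} − I) is monotone decreasing on the interval λ ∈ ((1−τ)‖K_e‖, ∞). -/

import Mathlib

open Matrix

noncomputable def matFun {n : ℕ} (A : Matrix (Fin n) (Fin n) ℝ) (f : ℝ → ℝ) :
    Matrix (Fin n) (Fin n) ℝ :=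
  if h : A.IsHermitian then
    (h.eigenvectorUnitary : Matrix (Fin n) (Fin n) ℝ) *
      Matrix.diagonal (fun i => f (h.eigenvalues i)) *
      star (h.eigenvectorUnitary : Matrix (Fin n) (Fin n) ℝ)
  else 0

noncomputable def specNorm {n : ℕ} (A : Matrix (Fin n) (Fin n) ℝ) : ℝ :=
  if h : A.IsHermitian then ⨆ i, h.eigenvalues i else 0

lemma tau_key_ineq (q u x : ℝ) (hq : 0 < q) (hu0 : 0 < u) (hxu : x = 1 - u) :
    u ^ (-q) - 1 + x * (-q) * u ^ (-q - 1) ≤ 0 := by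
  have hb : 1 + (q + 1) * (u - 1) ≤ u ^ (q + 1) := by
    have := one_add_mul_self_le_rpow_one_add (s := u - 1) (by linarith) (p := q + 1) (by linarith)
    simpa using this
  have h1 : u ^ (-q) = u * u ^ (-(q+1)) := by
    have h := Real.rpow_add hu0 1 (-(q+1))
    rw [Real.rpow_one] at h
    rw [show -q = 1 + (-(q+1)) by ring, h]
  calc u ^ (-q) - 1 + x * (-q) * u ^ (-q - 1)
      = (u - q*x) * u ^ (-(q+1)) - 1 := by
        rw [h1, show (-q-1 : ℝ) = -(q+1) by ring]; ring
    _ ≤ u ^ (q+1) * u ^ (-(q+1)) - 1 := by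
        have h2 : u - q*x ≤ u ^ (q+1) := by rw [hxu]; nlinarith [hb]
        nlinarith [Real.rpow_pos_of_pos hu0 (-(q+1))]
    _ = 0 := by
        rw [← Real.rpow_add hu0, show q + 1 + -(q + 1) = (0:ℝ) by ring, Real.rpow_zero]; ring

lemma tau_scalar_antitone (τ a b C : ℝ) (hτ0 : 0 < τ) (hτ1 : τ < 1) (ha : 0 ≤ a)
    (hC : 0 ≤ C) (hab : a ≤ b) (hb0 : 0 ≤ b) :
    AntitoneOn (fun l : ℝ => C * (1 - a / l)⁻¹ +
      (l / τ) * ((1 - a / l) ^ (τ / (τ - 1)) - 1)) (Set.Ioi b) := by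
  set p : ℝ := τ / (τ - 1) with hp
  have hq : p = -(τ / (1 - τ)) := by
    rw [hp]; field_simp
    rw [show τ - 1 = -(1 - τ) by ring, div_neg]
  have hqpos : 0 < τ / (1 - τ) := div_pos hτ0 (by linarith)
  have main : ∀ l ∈ Set.Ioi b, HasDerivAt (fun l : ℝ => C * (1 - a / l)⁻¹ +
      (l / τ) * ((1 - a / l) ^ p - 1))
      (C * (-(a * (l^2)⁻¹) / (1 - a/l)^2) +
        ((1/τ) * ((1 - a/l) ^ p - 1) + (l/τ) * (a * (l^2)⁻¹ * p * (1 - a/l) ^ (p-1)))) l := by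
    intro l hl
    have hlb : b < l := hl
    have hl0 : 0 < l := lt_of_le_of_lt hb0 hlb
    have hu0 : 0 < 1 - a / l := by
      rw [sub_pos, div_lt_one hl0]; exact lt_of_le_of_lt hab hlb
    have hu : HasDerivAt (fun l : ℝ => 1 - a / l) (a * (l^2)⁻¹) l := by
      have h1 : HasDerivAt (fun l : ℝ => a / l) (a * -((l^2)⁻¹)) l := by
        simpa [div_eq_mul_inv] using (hasDerivAt_inv (ne_of_gt hl0)).const_mul a
      exact ((hasDerivAt_const l (1:ℝ)).sub h1).congr_deriv (by ring)
    have hinv : HasDerivAt (fun l : ℝ => C * (1 - a / l)⁻¹)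
        (C * (-(a * (l^2)⁻¹) / (1 - a/l)^2)) l := (hu.inv (ne_of_gt hu0)).const_mul C
    have hpow : HasDerivAt (fun l : ℝ => (1 - a / l) ^ p)
        (a * (l^2)⁻¹ * p * (1 - a/l) ^ (p-1)) l :=
      hu.rpow_const (Or.inl (ne_of_gt hu0))
    have hmul : HasDerivAt (fun l : ℝ => (l / τ) * ((1 - a / l) ^ p - 1))
        ((1/τ) * ((1 - a/l) ^ p - 1) + (l/τ) * (a * (l^2)⁻¹ * p * (1 - a/l) ^ (p-1))) l := by
      exact ((hasDerivAt_id' l).div_const τ).mul (hpow.sub_const 1)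
    exact hinv.add hmul
  apply antitoneOn_of_deriv_nonpos (convex_Ioi b)
  · exact fun l hl => ((main l hl).continuousAt).continuousWithinAt
  · intro l hl
    rw [interior_Ioi] at hl
    exact (main l hl).differentiableAt.differentiableWithinAt
  · intro l hl
    rw [interior_Ioi] at hl
    rw [(main l hl).deriv]
    have hlb : b < l := hl
    have hl0 : 0 < l := lt_of_le_of_lt hb0 hlb
    have hu0 : 0 < 1 - a / l := by
      rw [sub_pos, div_lt_one hl0]; exact lt_of_le_of_lt hab hlb
    have h1 : C * (-(a * (l^2)⁻¹) / (1 - a/l)^2) ≤ 0 := by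
      apply mul_nonpos_of_nonneg_of_nonpos hC
      apply div_nonpos_of_nonpos_of_nonneg
      · have : 0 ≤ a * (l^2)⁻¹ := mul_nonneg ha (by positivity)
        linarith
      · positivity
    have h2 : (1/τ) * ((1 - a/l) ^ p - 1) + (l/τ) * (a * (l^2)⁻¹ * p * (1 - a/l) ^ (p-1)) ≤ 0 := by
      have hkey := tau_key_ineq (τ / (1 - τ)) (1 - a/l) (a/l) hqpos hu0 (by ring)
      rw [← hq] at hkey
      have hrw : (1/τ) * ((1 - a/l) ^ p - 1) + (l/τ) * (a * (l^2)⁻¹ * p * (1 - a/l) ^ (p-1))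
          = (1/τ) * ((1 - a/l) ^ p - 1 + (a/l) * p * (1 - a/l) ^ (p - 1)) := by
        field_simp
      rw [hrw]
      have hexp : (1 - a/l) ^ p - 1 + (a/l) * p * (1 - a/l) ^ (p - 1) ≤ 0 := by
        have : p - 1 = -(τ / (1-τ)) - 1 := by rw [hq]
        rw [hq, this] at *
        convert hkey using 2
      exact mul_nonpos_of_nonneg_of_nonpos (by positivity) hexp
    linarith

/-- The τ entropy `H_τ(m_e, K_e, ·)` is a monotone decreasing function of the
parameter `λ` on the interval `((1−τ)‖K_e‖, ∞)`. -/
theorem tau_entropy_antitone {n : ℕ} (Ke : Matrix (Fin n) (Fin n) ℝ)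
    (hKe : Ke.PosSemidef) (hKe0 : Ke ≠ 0) (me : Fin n → ℝ) (τ : ℝ)
    (hτ0 : 0 < τ) (hτ1 : τ < 1) :
    AntitoneOn (fun lam : ℝ =>
        me ⬝ᵥ (((1 : Matrix (Fin n) (Fin n) ℝ) - ((1 - τ) / lam) • Ke)⁻¹ *ᵥ me) +
        (lam / τ) * (matFun ((1 : Matrix (Fin n) (Fin n) ℝ) - ((1 - τ) / lam) • Ke)
            (fun x => x ^ (τ / (τ - 1))) - 1).trace)
      (Set.Ioi ((1 - τ) * specNorm Ke)) := by
  classical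
  have hK : Ke.IsHermitian := hKe.1
  set U : Matrix (Fin n) (Fin n) ℝ := (hK.eigenvectorUnitary : Matrix (Fin n) (Fin n) ℝ) with hU
  set μ : Fin n → ℝ := hK.eigenvalues with hμ
  have hUs : star U * U = 1 := Unitary.star_mul_self_of_mem (SetLike.coe_mem _)
  have hUU : U * star U = 1 := Unitary.mul_star_self_of_mem (SetLike.coe_mem _)
  have hspec : Ke = U * Matrix.diagonal μ * star U := by simpa using hK.spectral_theorem
  have hS : specNorm Ke = ⨆ i, μ i := by rw [specNorm, dif_pos hK]
  have hμ0 : ∀ i, 0 ≤ μ i := hKe.eigenvalues_nonneg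
  have hμS : ∀ i, μ i ≤ specNorm Ke := by
    intro i; rw [hS]
    exact le_ciSup (Set.Finite.bddAbove (Set.finite_range _)) i
  have hSpos : 0 < specNorm Ke := by
    rcases lt_or_ge 0 (specNorm Ke) with h | h
    · exact h
    · exfalso
      apply hKe0
      have hz : μ = fun _ => (0:ℝ) := by
        funext i
        exact le_antisymm (le_trans (hμS i) h) (hμ0 i)
      rw [hspec, hz]
      simp
  set b := (1 - τ) * specNorm Ke with hb
  have hb0 : 0 < b := mul_pos (by linarith) hSpos
  set v : Fin n → ℝ := star U *ᵥ me with hv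
  have heq : ∀ lam ∈ Set.Ioi b,
      me ⬝ᵥ (((1 : Matrix (Fin n) (Fin n) ℝ) - ((1 - τ) / lam) • Ke)⁻¹ *ᵥ me) +
        (lam / τ) * (matFun ((1 : Matrix (Fin n) (Fin n) ℝ) - ((1 - τ) / lam) • Ke)
            (fun x => x ^ (τ / (τ - 1))) - 1).trace
      = ∑ i, ((v i)^2 * (1 - ((1-τ) * μ i) / lam)⁻¹ +
          (lam / τ) * ((1 - ((1-τ) * μ i) / lam) ^ (τ/(τ-1)) - 1)) := by
    intro lam hlam
    have hblam : b < lam := hlam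
    have hlam0 : 0 < lam := lt_trans hb0 hblam
    set c : ℝ := (1 - τ)/lam with hc
    set d : Fin n → ℝ := fun i => 1 - c * μ i with hdd
    have harg : ∀ i, d i = 1 - ((1-τ) * μ i) / lam := by
      intro i; rw [hdd]; rw [hc]; ring
    have hd0 : ∀ i, 0 < d i := by
      intro i
      rw [harg i, sub_pos, div_lt_one hlam0]
      calc (1-τ) * μ i ≤ b := mul_le_mul_of_nonneg_left (hμS i) (by linarith)
        _ < lam := hblam
    have hdne : ∀ i, d i ≠ 0 := fun i => (hd0 i).ne'
    have hdiag : Matrix.diagonal d = 1 - c • Matrix.diagonal μ := by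
      ext i j
      by_cases h : i = j <;> simp [Matrix.diagonal, Matrix.one_apply, h, hdd]
    have hM : (1 : Matrix (Fin n) (Fin n) ℝ) - c • Ke = U * Matrix.diagonal d * star U := by
      symm
      calc U * Matrix.diagonal d * star U
          = U * (1 - c • Matrix.diagonal μ) * star U := by rw [hdiag]
        _ = U * star U - c • (U * Matrix.diagonal μ * star U) := by
            rw [Matrix.mul_sub, mul_one, Matrix.mul_smul, Matrix.sub_mul, Matrix.smul_mul]
        _ = 1 - c • Ke := by rw [hUU, ← hspec]
    have hherm : ((1 : Matrix (Fin n) (Fin n) ℝ) - c • Ke).IsHermitian := by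
      have h2 : Keᵀ = Ke := by rw [← Matrix.conjTranspose_eq_transpose_of_trivial, hK.eq]
      simp [Matrix.IsHermitian, Matrix.conjTranspose_sub, Matrix.conjTranspose_smul, h2]
    have hMinv : ((1 : Matrix (Fin n) (Fin n) ℝ) - c • Ke)⁻¹
        = U * Matrix.diagonal (fun i => (d i)⁻¹) * star U := by
      rw [hM]
      apply Matrix.inv_eq_right_inv
      calc U * Matrix.diagonal d * star U * (U * Matrix.diagonal (fun i => (d i)⁻¹) * star U)
          = U * (Matrix.diagonal d * (star U * U) * Matrix.diagonal (fun i => (d i)⁻¹)) *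
              star U := by simp only [mul_assoc]
        _ = 1 := by
            rw [hUs, mul_one, Matrix.diagonal_mul_diagonal]
            have h3 : (fun i => d i * (d i)⁻¹) = fun _ => (1:ℝ) := by
              funext i; exact mul_inv_cancel₀ (hdne i)
            rw [h3, Matrix.diagonal_one, mul_one, hUU]
    have hquad : me ⬝ᵥ (((1 : Matrix (Fin n) (Fin n) ℝ) - c • Ke)⁻¹ *ᵥ me)
        = ∑ i, (v i)^2 * (d i)⁻¹ := by
      rw [hMinv, ← Matrix.mulVec_mulVec, ← Matrix.mulVec_mulVec, Matrix.dotProduct_mulVec]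
      have hvv : Matrix.vecMul me U = star U *ᵥ me := by
        rw [Matrix.star_eq_conjTranspose, Matrix.conjTranspose_eq_transpose_of_trivial,
          Matrix.mulVec_transpose]
      rw [hvv, ← hv]
      simp [dotProduct, Matrix.mulVec_diagonal]
      exact Finset.sum_congr rfl fun i _ => by ring
    have hselfKe : IsSelfAdjoint Ke := hK
    have hcfc1 : cfc (fun x : ℝ => 1 - c * x) Ke = (1 : Matrix (Fin n) (Fin n) ℝ) - c • Ke := by
      rw [cfc_sub _ _ Ke, cfc_const_one ℝ Ke, cfc_const_mul_id c Ke]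
    have hmatFun : matFun ((1 : Matrix (Fin n) (Fin n) ℝ) - c • Ke) (fun x => x ^ (τ / (τ - 1)))
        = cfc (fun x : ℝ => x ^ (τ / (τ - 1))) ((1 : Matrix (Fin n) (Fin n) ℝ) - c • Ke) := by
      rw [matFun, dif_pos hherm, hherm.cfc_eq, Matrix.IsHermitian.cfc]
      congr 2
    have hcomp : cfc (fun x : ℝ => x ^ (τ / (τ - 1))) ((1 : Matrix (Fin n) (Fin n) ℝ) - c • Ke)
        = cfc (fun x : ℝ => (1 - c * x) ^ (τ / (τ - 1))) Ke := by
      rw [← hcfc1, ← cfc_comp (fun x : ℝ => x ^ (τ / (τ - 1))) (fun x : ℝ => 1 - c * x) Ke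
        hselfKe (Set.Finite.continuousOn (Set.Finite.image _ Ke.finite_real_spectrum) _)]
      rfl
    have htrace : (cfc (fun x : ℝ => (1 - c * x) ^ (τ / (τ - 1))) Ke).trace
        = ∑ i, (1 - c * μ i) ^ (τ / (τ - 1)) := by
      rw [hK.cfc_eq, Matrix.IsHermitian.cfc, Unitary.conjStarAlgAut_apply, Matrix.trace_mul_comm, ← mul_assoc,
        Unitary.star_mul_self_of_mem (SetLike.coe_mem _), one_mul, Matrix.trace_diagonal]
      simp
      rfl
    rw [hquad, Matrix.trace_sub, Matrix.trace_one, hmatFun, hcomp, htrace]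
    rw [Finset.sum_add_distrib]
    congr 1
    · exact Finset.sum_congr rfl fun i _ => by rw [harg i]
    · rw [← Finset.mul_sum]
      congr 1
      rw [Finset.sum_sub_distrib]
      congr 1
      · exact Finset.sum_congr rfl fun i _ => by
          rw [show (1:ℝ) - c * μ i = 1 - (1-τ) * μ i / lam from by rw [hc]; ring]
      · simp
  intro x hx y hy hxy
  simp only [heq x hx, heq y hy]
  apply Finset.sum_le_sum
  intro i _
  exact tau_scalar_antitone τ ((1-τ) * μ i) b ((v i)^2) hτ0 hτ1
    (mul_nonneg (by linarith) (hμ0 i)) (sq_nonneg _)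
    (mul_le_mul_of_nonneg_left (hμS i) (by linarith)) hb0.le hx hy hxy
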